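/- Let N, K be positive natural numbers with K ≥ 2, and let a : Fin N → Fin K → ℝ be a score matrix such that every row j ↦ a i j has a unique strict maximizer. If the two datasets induce identical scores, i.e. b = a (as for a classifier whose probabilistic response is unaffected by the shift), then the PA measure attains its maximal value: sup_{β ≥ 0} (1/N) · log(K^N · ∏_{i=1}^N ∑_{j=1}^K p_i(j)²) = log K, where p_i is the softmax of the row a i at inverse temperature β. -/
import Mathlib
open Finset Real Filter

noncomputable def softmaxPosterior {N K : ℕ} (β : ℝ) (F : Fin N → Fin K → ℝ)
    (i : Fin N) (j : Fin K) : ℝ :=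
  Real.exp (β * F i j) / ∑ l : Fin K, Real.exp (β * F i l)

lemma softmax_sum_pos {N K : ℕ} (hK : 0 < K) (β : ℝ) (F : Fin N → Fin K → ℝ) (i : Fin N) :
    0 < ∑ l : Fin K, Real.exp (β * F i l) := by
  have : Nonempty (Fin K) := Fin.pos_iff_nonempty.mp hK
  exact Finset.sum_pos (fun l _ => Real.exp_pos _) Finset.univ_nonempty

lemma softmax_pos {N K : ℕ} (hK : 0 < K) (β : ℝ) (F : Fin N → Fin K → ℝ)
    (i : Fin N) (j : Fin K) : 0 < softmaxPosterior β F i j :=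
  div_pos (Real.exp_pos _) (softmax_sum_pos hK β F i)

lemma softmax_sum_one {N K : ℕ} (hK : 0 < K) (β : ℝ) (F : Fin N → Fin K → ℝ)
    (i : Fin N) : ∑ j : Fin K, softmaxPosterior β F i j = 1 := by
  unfold softmaxPosterior
  rw [← Finset.sum_div, div_self (softmax_sum_pos hK β F i).ne']

lemma softmax_le_one {N K : ℕ} (hK : 0 < K) (β : ℝ) (F : Fin N → Fin K → ℝ)
    (i : Fin N) (j : Fin K) : softmaxPosterior β F i j ≤ 1 := by
  rw [← softmax_sum_one hK β F i]
  exact Finset.single_le_sum (fun l _ => (softmax_pos hK β F i l).le) (Finset.mem_univ j)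

lemma softmax_shift {N K : ℕ} (β : ℝ) (F : Fin N → Fin K → ℝ)
    (i : Fin N) (j : Fin K) (m : ℝ) :
    softmaxPosterior β F i j
      = Real.exp (β * (F i j - m)) / ∑ l : Fin K, Real.exp (β * (F i l - m)) := by
  unfold softmaxPosterior
  have h1 : ∀ l : Fin K, Real.exp (β * (F i l - m))
      = Real.exp (β * F i l) / Real.exp (β * m) := by
    intro l; rw [mul_sub, Real.exp_sub]
  rw [Finset.sum_congr rfl (fun l _ => h1 l), h1 j, ← Finset.sum_div]
  rw [div_div_div_cancel_right₀]
  exact (Real.exp_ne_zero _)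

lemma row_tendsto {N K : ℕ} (_hK : 0 < K) (F : Fin N → Fin K → ℝ) (i : Fin N)
    (jstar : Fin K) (h : ∀ j : Fin K, j ≠ jstar → F i j < F i jstar) :
    Tendsto (fun β : ℝ => ∑ j : Fin K, (softmaxPosterior β F i j) ^ 2) atTop
      (nhds 1) := by
  have hnum : ∀ j : Fin K, Tendsto (fun β : ℝ => Real.exp (β * (F i j - F i jstar)))
      atTop (nhds (if j = jstar then 1 else 0)) := by
    intro j
    by_cases hj : j = jstar
    · simp [hj]
    · simp only [if_neg hj]
      apply Real.tendsto_exp_atBot.comp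
      exact Tendsto.atTop_mul_const_of_neg (sub_neg.mpr (h j hj)) tendsto_id
  have hden : Tendsto (fun β : ℝ => ∑ l : Fin K, Real.exp (β * (F i l - F i jstar)))
      atTop (nhds 1) := by
    have := tendsto_finset_sum (Finset.univ : Finset (Fin K)) (fun l _ => hnum l)
    simpa using this
  have hp : ∀ j : Fin K, Tendsto (fun β : ℝ => softmaxPosterior β F i j) atTop
      (nhds (if j = jstar then 1 else 0)) := by
    intro j
    have := Tendsto.div (hnum j) hden one_ne_zero
    simp only [div_one] at this
    refine this.congr fun β => ?_
    exact (softmax_shift β F i j (F i jstar)).symm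
  have : Tendsto (fun β : ℝ => ∑ j : Fin K, (softmaxPosterior β F i j) ^ 2) atTop
      (nhds (∑ j : Fin K, (if j = jstar then (1:ℝ) else 0) ^ 2)) :=
    tendsto_finset_sum _ (fun j _ => (hp j).pow 2)
  simpa [ite_pow, Finset.sum_ite_eq'] using this

/-- **Maximal robustness of an unaffected model.** If every row of the score
matrix `a` has a unique strict maximizer and the two datasets induce identical
scores (`b = a`), then the PA measure attains its maximal value `log K`:
`sup_{β ≥ 0} (1/N) · log (K ^ N · ∏ᵢ ∑ⱼ pᵢ(j)²) = log K`. -/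
theorem pa_measure_eq_log_K_of_identical_scores (N K : ℕ)
    (hN : 0 < N) (hK : 2 ≤ K) (a : Fin N → Fin K → ℝ)
    (hmax : ∀ i : Fin N, ∃ jstar : Fin K,
      ∀ j : Fin K, j ≠ jstar → a i j < a i jstar) :
    sSup {x : ℝ | ∃ β : ℝ, 0 ≤ β ∧
        x = (1 / (N : ℝ)) *
          Real.log ((K : ℝ) ^ N *
            ∏ i : Fin N, ∑ j : Fin K, (softmaxPosterior β a i j) ^ 2)} =
      Real.log K := by
  have hK0 : 0 < K := by omega
  have hKR : (0:ℝ) < (K:ℝ) := by exact_mod_cast hK0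
  have hNR : (0:ℝ) < (N:ℝ) := by exact_mod_cast hN
  set f : ℝ → ℝ := fun β => (1 / (N : ℝ)) *
      Real.log ((K : ℝ) ^ N *
        ∏ i : Fin N, ∑ j : Fin K, (softmaxPosterior β a i j) ^ 2) with hf
  have hPpos : ∀ β : ℝ, 0 < ∏ i : Fin N, ∑ j : Fin K, (softmaxPosterior β a i j) ^ 2 := by
    intro β
    apply Finset.prod_pos
    intro i _
    have : Nonempty (Fin K) := Fin.pos_iff_nonempty.mp hK0
    exact Finset.sum_pos (fun j _ => pow_pos (softmax_pos hK0 β a i j) 2)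
      Finset.univ_nonempty
  have hPle : ∀ β : ℝ, (∏ i : Fin N, ∑ j : Fin K, (softmaxPosterior β a i j) ^ 2) ≤ 1 := by
    intro β
    apply Finset.prod_le_one (fun i _ => le_of_lt ?_) (fun i _ => ?_)
    · have : Nonempty (Fin K) := Fin.pos_iff_nonempty.mp hK0
      exact Finset.sum_pos (fun j _ => pow_pos (softmax_pos hK0 β a i j) 2)
        Finset.univ_nonempty
    · calc ∑ j : Fin K, (softmaxPosterior β a i j) ^ 2
          ≤ ∑ j : Fin K, softmaxPosterior β a i j := by
            apply Finset.sum_le_sum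
            intro j _
            have h1 := (softmax_pos hK0 β a i j).le
            have h2 := softmax_le_one hK0 β a i j
            nlinarith
        _ = 1 := softmax_sum_one hK0 β a i
  have hub : ∀ β : ℝ, f β ≤ Real.log K := by
    intro β
    have h1 : (K:ℝ) ^ N * (∏ i : Fin N, ∑ j : Fin K, (softmaxPosterior β a i j) ^ 2)
        ≤ (K:ℝ) ^ N := by
      nlinarith [hPle β, pow_pos hKR N, hPpos β]
    have h2 : Real.log ((K:ℝ) ^ N * ∏ i : Fin N, ∑ j : Fin K, (softmaxPosterior β a i j) ^ 2)
        ≤ Real.log ((K:ℝ) ^ N) :=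
      Real.log_le_log (mul_pos (pow_pos hKR N) (hPpos β)) h1
    calc f β ≤ (1 / (N:ℝ)) * Real.log ((K:ℝ) ^ N) := by
          apply mul_le_mul_of_nonneg_left h2 (by positivity)
      _ = Real.log K := by
          rw [Real.log_pow]
          field_simp
  have htend : Tendsto f atTop (nhds (Real.log K)) := by
    have hP : Tendsto (fun β : ℝ => ∏ i : Fin N, ∑ j : Fin K,
        (softmaxPosterior β a i j) ^ 2) atTop (nhds 1) := by
      have := tendsto_finset_prod (Finset.univ : Finset (Fin N))
        (fun i _ => row_tendsto hK0 a i (hmax i).choose (hmax i).choose_spec)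
      simpa using this
    have hKP : Tendsto (fun β : ℝ => (K:ℝ) ^ N * ∏ i : Fin N, ∑ j : Fin K,
        (softmaxPosterior β a i j) ^ 2) atTop (nhds ((K:ℝ) ^ N)) := by
      simpa using (tendsto_const_nhds.mul hP)
    have hlog : Tendsto f atTop (nhds ((1 / (N:ℝ)) * Real.log ((K:ℝ) ^ N))) := by
      exact tendsto_const_nhds.mul
        (((Real.continuousAt_log (by positivity)).tendsto).comp hKP)
    convert hlog using 2
    rw [Real.log_pow]
    field_simp
  apply csSup_eq_of_forall_le_of_forall_lt_exists_gt
  · exact ⟨f 0, 0, le_refl 0, rfl⟩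
  · rintro x ⟨β, hβ, rfl⟩
    exact hub β
  · intro w hw
    have h1 : ∀ᶠ β : ℝ in atTop, w < f β := htend.eventually (eventually_gt_nhds hw)
    obtain ⟨β, hβ0, hβw⟩ := ((eventually_ge_atTop (0:ℝ)).and h1).exists
    exact ⟨f β, ⟨β, hβ0, rfl⟩, hβw⟩
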